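/- Let K ⊆ ℝ^m be a nonempty closed convex set and let F : ℝ^n → ℝ^m be a map each of whose components has an L-Lipschitz continuous gradient. Define φ(x) = dist_∞(F(x), K) (the ℓ∞ distance from F(x) to K). Suppose at a point x and direction d there exists a point y ∈ K with ‖F(x) + ∇F(x)ᵀd − y‖_∞ = κ, and set Δ = φ(x) − κ. Then for all α ∈ [0,1], φ(x + αd) ≤ φ(x) − αΔ + (L/2)α²‖d‖². -/

import Mathlib

open Metric

/-- Quadratic Taylor bound for a scalar function with Lipschitz gradient
on the segment `[x, x+v]`. -/
lemma taylor_quad_aux (n : ℕ) (g : EuclideanSpace ℝ (Fin n) → ℝ)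
    (hg : Differentiable ℝ g) (x v : EuclideanSpace ℝ (Fin n)) (L : ℝ) (hL : 0 ≤ L)
    (hlip : LipschitzOnWith (Real.toNNReal L) (fun z => fderiv ℝ g z)
      (segment ℝ x (x + v))) :
    |g (x + v) - g x - fderiv ℝ g x v| ≤ L / 2 * ‖v‖ ^ 2 := by
  set φ : ℝ → ℝ := fun t => g (x + t • v) - g x - t * fderiv ℝ g x v with hφdef
  have hmem : ∀ t ∈ Set.Icc (0:ℝ) 1, x + t • v ∈ segment ℝ x (x + v) := by
    intro t ht
    rw [segment_eq_image']
    exact ⟨t, ht, by module⟩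
  have hφ' : ∀ t : ℝ, HasDerivAt φ (fderiv ℝ g (x + t • v) v - fderiv ℝ g x v) t := by
    intro t
    have hline : HasDerivAt (fun t : ℝ => x + t • v) v t := by
      simpa using (((hasDerivAt_id t).smul_const v).const_add x)
    have h1 : HasDerivAt (fun t : ℝ => g (x + t • v)) (fderiv ℝ g (x + t • v) v) t :=
      (hg (x + t • v)).hasFDerivAt.comp_hasDerivAt t hline
    exact (h1.sub_const (g x)).sub (hasDerivAt_mul_const (fderiv ℝ g x v))
  have key : ∀ t ∈ Set.Icc (0:ℝ) 1, ‖φ t‖ ≤ L * ‖v‖ ^ 2 / 2 * t ^ 2 := by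
    refine fun t ht => image_norm_le_of_norm_deriv_right_le_deriv_boundary
      (f := φ) (f' := fun t => fderiv ℝ g (x + t • v) v - fderiv ℝ g x v)
      (B := fun t => L * ‖v‖ ^ 2 / 2 * t ^ 2) (B' := fun t => L * ‖v‖ ^ 2 * t)
      (a := 0) (b := 1) ?_ ?_ ?_ ?_ ?_ ht
    · exact fun s _ => (hφ' s).continuousAt.continuousWithinAt
    · exact fun s _ => (hφ' s).hasDerivWithinAt
    · simp [hφdef]
    · intro s
      have := ((hasDerivAt_pow 2 s).const_mul (L * ‖v‖ ^ 2 / 2))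
      refine this.congr_deriv ?_
      norm_num
      ring
    · intro s hs
      have hs0 : 0 ≤ s := hs.1
      have hs1 : s ≤ 1 := le_of_lt hs.2
      have hm : x + s • v ∈ segment ℝ x (x + v) := hmem s ⟨hs0, hs1⟩
      have hx0 : x ∈ segment ℝ x (x + v) := left_mem_segment ℝ x (x + v)
      have hdle := hlip.dist_le_mul (x + s • v) hm x hx0
      rw [Real.coe_toNNReal L hL] at hdle
      have hdist : dist (x + s • v) x = s * ‖v‖ := by
        rw [dist_eq_norm]
        simp [norm_smul, abs_of_nonneg hs0]
      have hop : ‖fderiv ℝ g (x + s • v) - fderiv ℝ g x‖ ≤ L * (s * ‖v‖) := by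
        rw [← dist_eq_norm, ← hdist]; exact hdle
      calc ‖fderiv ℝ g (x + s • v) v - fderiv ℝ g x v‖
          = ‖(fderiv ℝ g (x + s • v) - fderiv ℝ g x) v‖ := by
            simp [ContinuousLinearMap.sub_apply]
        _ ≤ ‖fderiv ℝ g (x + s • v) - fderiv ℝ g x‖ * ‖v‖ :=
            (fderiv ℝ g (x + s • v) - fderiv ℝ g x).le_opNorm v
        _ ≤ L * (s * ‖v‖) * ‖v‖ := by
            apply mul_le_mul_of_nonneg_right hop (norm_nonneg v)
        _ = L * ‖v‖ ^ 2 * s := by ring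
  have h1 := key 1 ⟨zero_le_one, le_refl 1⟩
  have : φ 1 = g (x + v) - g x - fderiv ℝ g x v := by simp [hφdef]
  rw [this] at h1
  simpa [Real.norm_eq_abs] using h1.trans_eq (by ring)

/-- Infeasibility-decrease estimate: if each component of `F` has an
`L`-Lipschitz derivative on the segment `[x, x+d]`, `K` is a nonempty closed
convex set, `φ(x) = dist_∞(F(x), K)` (the Pi/sup metric on `Fin m → ℝ`),
and `y ∈ K` achieves `‖F(x) + F'(x)d − y‖_∞ = κ`, then with
`Δ = φ(x) − κ` we have `φ(x + αd) ≤ φ(x) − αΔ + (L/2)α²‖d‖²` for `α ∈ [0,1]`. -/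
theorem stmt_0 (n m : ℕ) (K : Set (Fin m → ℝ)) (hKne : K.Nonempty)
    (hKcl : IsClosed K) (hKconv : Convex ℝ K)
    (F : EuclideanSpace ℝ (Fin n) → Fin m → ℝ) (L : ℝ) (hL : 0 ≤ L)
    (x d : EuclideanSpace ℝ (Fin n))
    (hdiff : ∀ i, Differentiable ℝ (fun z => F z i))
    (hlip : ∀ i, LipschitzOnWith (Real.toNNReal L)
      (fun z => fderiv ℝ (fun w => F w i) z) (segment ℝ x (x + d)))
    (κ Δ : ℝ) (y : Fin m → ℝ) (hy : y ∈ K)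
    (hκ : ‖(fun i => F x i + fderiv ℝ (fun w => F w i) x d) - y‖ = κ)
    (hΔ : Δ = infDist (F x) K - κ) :
    ∀ α ∈ Set.Icc (0:ℝ) 1,
      infDist (F (x + α • d)) K ≤ infDist (F x) K - α * Δ + L / 2 * α ^ 2 * ‖d‖ ^ 2 := by
  intro α hα
  obtain ⟨hα0, hα1⟩ := hα
  -- projection point
  obtain ⟨p, hpK, hpd⟩ := hKcl.exists_infDist_eq_dist hKne (F x)
  -- the comparison point in K
  set z : Fin m → ℝ := (1 - α) • p + α • y with hz
  have hzK : z ∈ K := hKconv hpK hy (by linarith) hα0 (by ring)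
  -- per-component Taylor bound
  have hsub : segment ℝ x (x + α • d) ⊆ segment ℝ x (x + d) := by
    intro w hw
    rw [segment_eq_image'] at hw ⊢
    obtain ⟨t, ht, rfl⟩ := hw
    refine ⟨t * α, ⟨mul_nonneg ht.1 hα0,
      mul_le_one₀ ht.2 hα0 hα1⟩, ?_⟩
    module
  have hTay : ∀ i, |F (x + α • d) i - F x i - fderiv ℝ (fun w => F w i) x (α • d)|
      ≤ L / 2 * α ^ 2 * ‖d‖ ^ 2 := by
    intro i
    have := taylor_quad_aux n (fun w => F w i) (hdiff i) x (α • d) L hL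
      ((hlip i).mono hsub)
    calc |F (x + α • d) i - F x i - fderiv ℝ (fun w => F w i) x (α • d)|
        ≤ L / 2 * ‖α • d‖ ^ 2 := this
      _ = L / 2 * α ^ 2 * ‖d‖ ^ 2 := by
          rw [norm_smul]
          simp [abs_of_nonneg hα0]
          ring
  -- assemble
  have hC : (0:ℝ) ≤ L / 2 * α ^ 2 * ‖d‖ ^ 2 := by positivity
  -- first piece: sup-norm bound on Taylor remainder
  have hrem : ‖(fun i => F (x + α • d) i - F x i - fderiv ℝ (fun w => F w i) x (α • d))‖
      ≤ L / 2 * α ^ 2 * ‖d‖ ^ 2 := by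
    rw [pi_norm_le_iff_of_nonneg hC]
    intro i
    simpa [Real.norm_eq_abs] using hTay i
  -- second piece: convex combination bound
  have hcomb : ‖(fun i => F x i + fderiv ℝ (fun w => F w i) x (α • d)) - z‖
      ≤ infDist (F x) K - α * Δ := by
    have hrw : (fun i => F x i + fderiv ℝ (fun w => F w i) x (α • d)) - z
        = (1 - α) • (F x - p) + α • ((fun i => F x i + fderiv ℝ (fun w => F w i) x d) - y) := by
      funext i
      simp only [Pi.sub_apply, Pi.add_apply, Pi.smul_apply, hz, smul_eq_mul, map_smul]
      ring
    rw [hrw]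
    calc ‖(1 - α) • (F x - p) + α • ((fun i => F x i + fderiv ℝ (fun w => F w i) x d) - y)‖
        ≤ ‖(1 - α) • (F x - p)‖ + ‖α • ((fun i => F x i + fderiv ℝ (fun w => F w i) x d) - y)‖ :=
          norm_add_le _ _
      _ = (1 - α) * ‖F x - p‖ + α * κ := by
          rw [norm_smul, norm_smul, hκ]
          simp [abs_of_nonneg hα0, abs_of_nonneg (by linarith : (0:ℝ) ≤ 1 - α)]
      _ = (1 - α) * infDist (F x) K + α * κ := by
          rw [hpd, dist_eq_norm]
      _ = infDist (F x) K - α * Δ := by rw [hΔ]; ring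
  calc infDist (F (x + α • d)) K
      ≤ dist (F (x + α • d)) z := infDist_le_dist_of_mem hzK
    _ = ‖(fun i => F (x + α • d) i - F x i - fderiv ℝ (fun w => F w i) x (α • d))
        + ((fun i => F x i + fderiv ℝ (fun w => F w i) x (α • d)) - z)‖ := by
        rw [dist_eq_norm]
        congr 1
        funext i
        simp only [Pi.add_apply, Pi.sub_apply]
        ring
    _ ≤ ‖(fun i => F (x + α • d) i - F x i - fderiv ℝ (fun w => F w i) x (α • d))‖
        + ‖(fun i => F x i + fderiv ℝ (fun w => F w i) x (α • d)) - z‖ := norm_add_le _ _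
    _ ≤ L / 2 * α ^ 2 * ‖d‖ ^ 2 + (infDist (F x) K - α * Δ) := add_le_add hrem hcomb
    _ = infDist (F x) K - α * Δ + L / 2 * α ^ 2 * ‖d‖ ^ 2 := by ring
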